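/- arXiv:2406.01050 — 2 statements merged into one kernel-verified Lean document; each statement's English description precedes it below -/
import Mathlib

section
/- The subspace H = span_K{e_u : u ∈ D_μ, u ≠ 1} is invariant; every invariant subspace W with W ≠ V is contained in H, so H is the unique maximal proper invariant subspace of V; moreover U_k(V) ⊆ H for every k, so all U_k act as 0 on the one-dimensional quotient V/H. -/
open scoped Classical

noncomputable section

/-- The Coxeter length of a permutation of `Fin n`: its number of inversions. -/
def permLen {n : ℕ} (w : Equiv.Perm (Fin n)) : ℕ :=
  (Finset.univ.filter fun p : Fin n × Fin n => p.1 < p.2 ∧ w p.2 < w p.1).card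

/-- The partial sums (block offsets) of a composition `μ`. -/
def off (μ : ℕ → ℕ) (t : ℕ) : ℕ := ∑ s ∈ Finset.range t, μ s

/-- `p` and `q` lie in the same (consecutive) block of the composition
`(μ 0, …, μ (r-1))`. -/
def sameBlock (r : ℕ) (μ : ℕ → ℕ) (p q : ℕ) : Prop :=
  ∃ t < r, off μ t ≤ p ∧ p < off μ (t + 1) ∧ off μ t ≤ q ∧ q < off μ (t + 1)

/-- The set `D_μ` of minimal-length representatives of the left cosets `u • S_μ`:
permutations increasing on each block of `μ`. -/
def Dmu (n r : ℕ) (μ : ℕ → ℕ) : Set (Equiv.Perm (Fin n)) :=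
  {u | ∀ p q : Fin n, p < q → sameBlock r μ (p : ℕ) (q : ℕ) → u p < u q}

/-- The adjacent transposition `s_k = (k, k+1)` (0-indexed), as a permutation
of `Fin n` (junk value `1` if out of range). -/
def adjSwap (n k : ℕ) : Equiv.Perm (Fin n) :=
  if h : k + 1 < n then Equiv.swap ⟨k, Nat.lt_of_succ_lt h⟩ ⟨k + 1, h⟩ else 1

/-- The index type for the basis `{e_u : u ∈ D_μ}` of the vector space `V`. -/
abbrev DmuSub (n r : ℕ) (μ : ℕ → ℕ) : Type := {u : Equiv.Perm (Fin n) // u ∈ Dmu n r μ}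

/-- The defining property of the family of `K`-linear operators
`U_k : V → V` on `V = (DmuSub n r μ → K)`:
`U_k (e_u) = e_{s_k u}` if `ℓ(s_k u) = ℓ(u) + 1` and `s_k u ∈ D_μ`, and
`U_k (e_u) = 0` otherwise (here `e_u = Pi.single u 1`). -/
def IsUFamily (K : Type*) [Field K] (n r : ℕ) (μ : ℕ → ℕ)
    (U : ℕ → ((DmuSub n r μ → K) →ₗ[K] (DmuSub n r μ → K))) : Prop :=
  ∀ k, k + 1 < n → ∀ u : DmuSub n r μ,
    U k (Pi.single u (1 : K)) =
      if h : permLen (adjSwap n k * u.1) = permLen u.1 + 1 ∧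
          adjSwap n k * u.1 ∈ Dmu n r μ
      then Pi.single (⟨adjSwap n k * u.1, h.2⟩ : DmuSub n r μ) (1 : K) else 0

lemma permLen_one {n : ℕ} : permLen (1 : Equiv.Perm (Fin n)) = 0 := by
  rw [permLen, Finset.card_eq_zero, Finset.filter_eq_empty_iff]
  rintro ⟨a,b⟩ _ ⟨h, h'⟩
  exact absurd h' (not_lt.2 h.le)

lemma swap_lt {n k : ℕ} (h : k + 1 < n) (a b : Fin n) :
    Equiv.swap ⟨k, Nat.lt_of_succ_lt h⟩ ⟨k + 1, h⟩ a <
      Equiv.swap ⟨k, Nat.lt_of_succ_lt h⟩ ⟨k + 1, h⟩ b ↔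
    ((a < b ∧ ¬(a = ⟨k, Nat.lt_of_succ_lt h⟩ ∧ b = ⟨k + 1, h⟩)) ∨
      (a = ⟨k + 1, h⟩ ∧ b = ⟨k, Nat.lt_of_succ_lt h⟩)) := by
  simp only [Equiv.swap_apply_def, Fin.lt_def, Fin.ext_iff]
  split_ifs <;> simp_all <;> omega

lemma strictMono_eq_one {n : ℕ} (u : Equiv.Perm (Fin n)) (h : StrictMono u) : u = 1 := by
  have := (StrictMono.range_inj h (strictMono_id)).1 (by
    rw [Set.range_id]; exact Equiv.range_eq_univ u)
  ext x
  exact congrArg Fin.val (congrFun this x)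

lemma permLen_eq_zero {n : ℕ} (u : Equiv.Perm (Fin n)) (h : permLen u = 0) : u = 1 := by
  apply strictMono_eq_one
  intro p q hpq
  rcases lt_or_ge (u p) (u q) with h' | h'
  · exact h'
  · exfalso
    rcases h'.lt_or_eq with h' | h'
    · have : (p, q) ∈ (Finset.univ.filter fun p : Fin n × Fin n => p.1 < p.2 ∧ u p.2 < u p.1) := by
        simp [hpq, h']
      have := Finset.card_eq_zero.1 h
      simp [this] at *
    · exact absurd (u.injective h'.symm) hpq.ne

lemma adjSwap_eq {n k : ℕ} (h : k + 1 < n) :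
    adjSwap n k = Equiv.swap ⟨k, Nat.lt_of_succ_lt h⟩ ⟨k + 1, h⟩ := dif_pos h

lemma exists_descent {n : ℕ} (u : Equiv.Perm (Fin n)) (hu : u ≠ 1) :
    ∃ k, ∃ h : k + 1 < n, u⁻¹ ⟨k + 1, h⟩ < u⁻¹ ⟨k, Nat.lt_of_succ_lt h⟩ := by
  by_contra hc
  push_neg at hc
  apply hu
  have hinj : Function.Injective (u⁻¹ : Equiv.Perm (Fin n)) := Equiv.injective _
  have hmono : StrictMono (u⁻¹ : Equiv.Perm (Fin n)) := by
    have key : ∀ k, ∀ h : k + 1 < n,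
        u⁻¹ ⟨k, Nat.lt_of_succ_lt h⟩ < u⁻¹ ⟨k + 1, h⟩ := by
      intro k h
      have := hc k h
      rcases lt_or_eq_of_le this with h' | h'
      · exact h'
      · exact absurd (congrArg Fin.val (hinj h')) (by simp)
    match n, u, hc, key with
    | 0, u, _, _ => exact fun p q hpq => absurd p.isLt (by omega)
    | (m+1), u, hc, key =>
      rw [Fin.strictMono_iff_lt_succ]
      intro i
      have hlt : (i : ℕ) + 1 < m + 1 := by omega
      have h1 : Fin.castSucc i = ⟨(i : ℕ), Nat.lt_of_succ_lt hlt⟩ := Fin.ext rfl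
      have h2 : Fin.succ i = ⟨(i : ℕ) + 1, hlt⟩ := Fin.ext rfl
      rw [h1, h2]
      exact key (i : ℕ) hlt
  have : u⁻¹ = 1 := strictMono_eq_one _ hmono
  calc u = (u⁻¹)⁻¹ := by simp
  _ = 1 := by rw [this]; simp

lemma permLen_swap_mul {n k : ℕ} (h : k + 1 < n) (u : Equiv.Perm (Fin n))
    (hd : u⁻¹ ⟨k + 1, h⟩ < u⁻¹ ⟨k, Nat.lt_of_succ_lt h⟩) :
    permLen (adjSwap n k * u) + 1 = permLen u := by
  set K : Fin n := ⟨k, Nat.lt_of_succ_lt h⟩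
  set K' : Fin n := ⟨k + 1, h⟩
  set bad : Fin n × Fin n := (u⁻¹ K', u⁻¹ K)
  have hfil : (Finset.univ.filter fun p : Fin n × Fin n =>
      p.1 < p.2 ∧ (adjSwap n k * u) p.2 < (adjSwap n k * u) p.1) =
      (Finset.univ.filter fun p : Fin n × Fin n => p.1 < p.2 ∧ u p.2 < u p.1).erase bad := by
    ext pq
    obtain ⟨p, q⟩ := pq
    have e : ∀ (x y : Fin n), u x = y ↔ x = u⁻¹ y := fun x y => by
      rw [Equiv.Perm.eq_inv_iff_eq]
    simp only [Finset.mem_erase, Finset.mem_filter, Finset.mem_univ, true_and,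
      Equiv.Perm.mul_apply, adjSwap_eq h]
    rw [swap_lt h (u q) (u p), e, e, e, e]
    have hprod : ((p, q) ≠ bad) ↔ ¬(q = u⁻¹ K ∧ p = u⁻¹ K') := by
      simp [bad, Prod.ext_iff, and_comm]
    rw [hprod]
    constructor
    · rintro ⟨hpq, (⟨huv, hne⟩ | ⟨h1, h2⟩)⟩
      · exact ⟨hne, hpq, huv⟩
      · subst h1; subst h2; exact absurd hpq (not_lt.2 hd.le)
    · rintro ⟨hne, hpq, huv⟩
      exact ⟨hpq, Or.inl ⟨huv, hne⟩⟩
  have hbad : bad ∈ (Finset.univ.filter fun p : Fin n × Fin n => p.1 < p.2 ∧ u p.2 < u p.1) := by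
    simp only [Finset.mem_filter, Finset.mem_univ, true_and]
    refine ⟨hd, ?_⟩
    simp [bad, Fin.lt_def, K, K']
  rw [permLen, permLen, hfil, Finset.card_erase_of_mem hbad]
  have : 1 ≤ (Finset.univ.filter fun p : Fin n × Fin n => p.1 < p.2 ∧ u p.2 < u p.1).card :=
    Finset.card_pos.2 ⟨bad, hbad⟩
  omega

lemma dmu_swap {n r : ℕ} {μ : ℕ → ℕ} {k : ℕ} (h : k + 1 < n) (u : Equiv.Perm (Fin n))
    (hu : u ∈ Dmu n r μ)
    (hd : u⁻¹ ⟨k + 1, h⟩ < u⁻¹ ⟨k, Nat.lt_of_succ_lt h⟩) :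
    adjSwap n k * u ∈ Dmu n r μ := by
  intro p q hpq hblk
  have huv := hu p q hpq hblk
  rw [Equiv.Perm.mul_apply, Equiv.Perm.mul_apply, adjSwap_eq h, swap_lt h]
  left
  refine ⟨huv, ?_⟩
  rintro ⟨e1, e2⟩
  have hp : p = u⁻¹ ⟨k, Nat.lt_of_succ_lt h⟩ := Equiv.Perm.eq_inv_iff_eq.2 e1
  have hq : q = u⁻¹ ⟨k + 1, h⟩ := Equiv.Perm.eq_inv_iff_eq.2 e2
  rw [hp, hq] at hpq
  exact absurd hpq (not_lt.2 hd.le)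

lemma exists_step {n r : ℕ} {μ : ℕ → ℕ} (u : Equiv.Perm (Fin n)) (hu : u ∈ Dmu n r μ)
    (hne : u ≠ 1) :
    ∃ k, k + 1 < n ∧ ∃ v : Equiv.Perm (Fin n), v ∈ Dmu n r μ ∧
      adjSwap n k * v = u ∧ permLen v + 1 = permLen u := by
  obtain ⟨k, h, hd⟩ := exists_descent u hne
  refine ⟨k, h, adjSwap n k * u, dmu_swap h u hu hd, ?_, permLen_swap_mul h u hd⟩
  rw [← mul_assoc, adjSwap_eq h, Equiv.swap_mul_self, one_mul]

lemma permLen_le {n : ℕ} (w : Equiv.Perm (Fin n)) : permLen w ≤ n * n := by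
  calc permLen w ≤ (Finset.univ : Finset (Fin n × Fin n)).card := Finset.card_filter_le _ _
  _ = n * n := by simp [Finset.card_univ]

lemma repr_eq (K : Type*) [Field K] {n r : ℕ} {μ : ℕ → ℕ} (f : DmuSub n r μ → K) :
    f = ∑ u : DmuSub n r μ, f u • (Pi.single u (1 : K) : DmuSub n r μ → K) := by
  have hsm : ∀ u : DmuSub n r μ, f u • (Pi.single u (1 : K) : DmuSub n r μ → K) =
      Pi.single u (f u) := by
    intro u
    funext z
    simp [Pi.single_apply, mul_ite]
  simp only [hsm]
  funext y
  rw [Finset.sum_apply]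
  exact (Fintype.sum_pi_single y f).symm

/-- Lemma 1.3(ii) of the paper, concretely: the span `H` of the
basis vectors `e_u` with `u ≠ 1` is invariant, every invariant subspace
`W ≠ V` is contained in `H` (so `H` is the unique maximal proper invariant
subspace of `V`), and `U_k(V) ⊆ H` for every `k` (so every `U_k` acts as `0`
on the quotient `V/H`). -/
theorem stmt10 (K : Type*) [Field K] {n r : ℕ} (hn : 1 ≤ n) (μ : ℕ → ℕ)
    (hpos : ∀ t < r, 1 ≤ μ t) (hsum : off μ r = n)
    (U : ℕ → ((DmuSub n r μ → K) →ₗ[K] (DmuSub n r μ → K)))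
    (hU : IsUFamily K n r μ U) :
    (∀ k, k + 1 < n → ∀ v ∈ Submodule.span K
        {f : DmuSub n r μ → K | ∃ u : DmuSub n r μ, u.1 ≠ 1 ∧ f = Pi.single u (1 : K)},
      U k v ∈ Submodule.span K
        {f : DmuSub n r μ → K | ∃ u : DmuSub n r μ, u.1 ≠ 1 ∧ f = Pi.single u (1 : K)}) ∧
    (∀ W : Submodule K (DmuSub n r μ → K),
      (∀ k, k + 1 < n → ∀ v ∈ W, U k v ∈ W) → W ≠ ⊤ →
      W ≤ Submodule.span K
        {f : DmuSub n r μ → K | ∃ u : DmuSub n r μ, u.1 ≠ 1 ∧ f = Pi.single u (1 : K)}) ∧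
    (∀ k, k + 1 < n → ∀ v : DmuSub n r μ → K,
      U k v ∈ Submodule.span K
        {f : DmuSub n r μ → K | ∃ u : DmuSub n r μ, u.1 ≠ 1 ∧ f = Pi.single u (1 : K)}) := by
  set S : Set (DmuSub n r μ → K) :=
    {f : DmuSub n r μ → K | ∃ u : DmuSub n r μ, u.1 ≠ 1 ∧ f = Pi.single u (1 : K)} with hS
  set H : Submodule K (DmuSub n r μ → K) := Submodule.span K S with hH
  -- Part 3 first
  have key3 : ∀ k, k + 1 < n → ∀ v : DmuSub n r μ → K, U k v ∈ H := by
    intro k hk v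
    have hsingle : ∀ u : DmuSub n r μ, U k (Pi.single u (1 : K)) ∈ H := by
      intro u
      rw [hU k hk u]
      by_cases hc : permLen (adjSwap n k * u.1) = permLen u.1 + 1 ∧
          adjSwap n k * u.1 ∈ Dmu n r μ
      · rw [dif_pos hc]
        apply Submodule.subset_span
        refine ⟨⟨adjSwap n k * u.1, hc.2⟩, ?_, rfl⟩
        intro he
        have he' : adjSwap n k * u.1 = 1 := he
        have h0 := hc.1
        rw [he', permLen_one] at h0
        omega
      · rw [dif_neg hc]
        exact zero_mem _
    rw [repr_eq K v, map_sum]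
    apply Submodule.sum_mem
    intro u _
    rw [map_smul]
    exact Submodule.smul_mem _ _ (hsingle u)
  refine ⟨fun k hk v _ => key3 k hk v, ?_, key3⟩
  -- Part 2
  intro W hinv hne
  by_contra hnle
  obtain ⟨w₀, hw₀W, hw₀H⟩ := SetLike.not_le_iff_exists.1 hnle
  have one_mem : (1 : Equiv.Perm (Fin n)) ∈ Dmu n r μ := by
    intro p q hpq _
    simpa using hpq
  set one : DmuSub n r μ := ⟨1, one_mem⟩ with hone
  have mem_H_of_zero : ∀ f : DmuSub n r μ → K, f one = 0 → f ∈ H := by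
    intro f hf
    rw [repr_eq K f]
    apply Submodule.sum_mem
    intro u _
    by_cases hu : u = one
    · rw [hu, hf, zero_smul]
      exact zero_mem _
    · apply Submodule.smul_mem
      apply Submodule.subset_span
      exact ⟨u, fun h => hu (Subtype.ext h), rfl⟩
  have h0 : w₀ one ≠ 0 := fun h => hw₀H (mem_H_of_zero w₀ h)
  -- pointwise formula for U k applied to anything
  have hterm : ∀ k, k + 1 < n → ∀ (x y : DmuSub n r μ),
      (U k (Pi.single x (1 : K))) y =
        if (permLen (adjSwap n k * x.1) = permLen x.1 + 1 ∧ adjSwap n k * x.1 ∈ Dmu n r μ)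
            ∧ y.1 = adjSwap n k * x.1 then 1 else 0 := by
    intro k hk x y
    rw [hU k hk x]
    by_cases hc : permLen (adjSwap n k * x.1) = permLen x.1 + 1 ∧
        adjSwap n k * x.1 ∈ Dmu n r μ
    · rw [dif_pos hc]
      by_cases hy : y.1 = adjSwap n k * x.1
      · rw [if_pos ⟨hc, hy⟩]
        have hyy : y = (⟨adjSwap n k * x.1, hc.2⟩ : DmuSub n r μ) := Subtype.ext hy
        rw [hyy, Pi.single_eq_same]
      · rw [if_neg (by rintro ⟨_, h⟩; exact hy h)]
        have hyy : y ≠ (⟨adjSwap n k * x.1, hc.2⟩ : DmuSub n r μ) :=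
          fun h => hy (congrArg Subtype.val h)
        exact Pi.single_eq_of_ne hyy 1
    · rw [dif_neg hc, if_neg (fun h => hc h.1)]
      rfl
  have heval : ∀ k, k + 1 < n → ∀ (g : DmuSub n r μ → K) (y : DmuSub n r μ),
      (U k g) y = ∑ x : DmuSub n r μ, g x *
        (if (permLen (adjSwap n k * x.1) = permLen x.1 + 1 ∧ adjSwap n k * x.1 ∈ Dmu n r μ)
            ∧ y.1 = adjSwap n k * x.1 then 1 else 0) := by
    intro k hk g y
    conv_lhs => rw [repr_eq K g]
    rw [map_sum, Finset.sum_apply]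
    apply Finset.sum_congr rfl
    intro x _
    rw [map_smul, Pi.smul_apply, smul_eq_mul, hterm k hk x y]
  -- Lemma D
  have lemD : ∀ m : ℕ, ∀ u : DmuSub n r μ, permLen u.1 = m →
      ∃ w, w ∈ W ∧ w u ≠ 0 ∧
        ∀ x : DmuSub n r μ, w x ≠ 0 → x = u ∨ permLen u.1 < permLen x.1 := by
    intro m
    induction m using Nat.strong_induction_on with
    | _ m ih =>
      intro u hm
      by_cases h1 : u.1 = 1
      · refine ⟨w₀, hw₀W, ?_, ?_⟩
        · rw [show u = one from Subtype.ext h1]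
          exact h0
        · intro x hx
          rcases Nat.eq_zero_or_pos (permLen x.1) with h' | h'
          · left
            exact Subtype.ext (by rw [permLen_eq_zero _ h', h1])
          · right
            rw [h1, permLen_one]
            exact h'
      · obtain ⟨k, hk, v, hvD, hsv, hlen⟩ := exists_step u.1 u.2 h1
        have hvlt : permLen v < m := by omega
        obtain ⟨w', hw'W, hw'v, hw'supp⟩ := ih (permLen v) hvlt ⟨v, hvD⟩ rfl
        set vv : DmuSub n r μ := ⟨v, hvD⟩ with hvv
        have hiff : ∀ x : DmuSub n r μ,
            ((permLen (adjSwap n k * x.1) = permLen x.1 + 1 ∧ adjSwap n k * x.1 ∈ Dmu n r μ)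
              ∧ u.1 = adjSwap n k * x.1) ↔ x = vv := by
          intro x
          constructor
          · rintro ⟨_, hy⟩
            apply Subtype.ext
            exact mul_left_cancel (hy.symm.trans hsv.symm)
          · rintro rfl
            refine ⟨⟨?_, ?_⟩, hsv.symm⟩
            · show permLen (adjSwap n k * v) = permLen v + 1
              rw [hsv, ← hlen]
            · show adjSwap n k * v ∈ Dmu n r μ
              rw [hsv]
              exact u.2
        refine ⟨U k w', hinv k hk w' hw'W, ?_, ?_⟩
        · rw [heval k hk w' u]
          have : ∀ x ∈ (Finset.univ : Finset (DmuSub n r μ)),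
              w' x * (if (permLen (adjSwap n k * x.1) = permLen x.1 + 1 ∧
                  adjSwap n k * x.1 ∈ Dmu n r μ) ∧ u.1 = adjSwap n k * x.1 then 1 else 0) =
              w' x * (if x = vv then 1 else 0) := by
            intro x _
            rw [if_congr (hiff x) rfl rfl]
          rw [Finset.sum_congr rfl this]
          simpa using hw'v
        · intro y hy
          rw [heval k hk w' y] at hy
          obtain ⟨x, _, hx⟩ := Finset.exists_ne_zero_of_sum_ne_zero hy
          have hw'x : w' x ≠ 0 := fun h => hx (by rw [h, zero_mul])
          have hcond : (permLen (adjSwap n k * x.1) = permLen x.1 + 1 ∧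
              adjSwap n k * x.1 ∈ Dmu n r μ) ∧ y.1 = adjSwap n k * x.1 := by
            by_contra hc
            rw [if_neg hc, mul_zero] at hx
            exact hx rfl
          have hylen : permLen y.1 = permLen x.1 + 1 := by
            rw [hcond.2]
            exact hcond.1.1
          rcases hw'supp x hw'x with hxv | hxlt
          · left
            apply Subtype.ext
            rw [hcond.2, hxv]
            exact hsv
          · right
            have hvvv : permLen (vv.1 : Equiv.Perm (Fin n)) = permLen v := rfl
            omega
  have allW : ∀ u : DmuSub n r μ, Pi.single u (1 : K) ∈ W := by
    have main : ∀ m : ℕ, ∀ u : DmuSub n r μ, n * n - permLen u.1 = m →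
        Pi.single u (1 : K) ∈ W := by
      intro m
      induction m using Nat.strong_induction_on with
      | _ m ih =>
        intro u hm
        obtain ⟨w, hwW, hwu, hsupp⟩ := lemD (permLen u.1) u rfl
        have hrest : ∑ x ∈ Finset.univ.erase u,
            w x • (Pi.single x (1 : K) : DmuSub n r μ → K) ∈ W := by
          apply Submodule.sum_mem
          intro x hx
          have hxu : x ≠ u := (Finset.mem_erase.1 hx).1
          by_cases hwx : w x = 0
          · rw [hwx, zero_smul]
            exact zero_mem _
          · rcases hsupp x hwx with h' | h'
            · exact absurd h' hxu
            · apply Submodule.smul_mem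
              have b1 := permLen_le x.1
              exact ih (n * n - permLen x.1) (by omega) x rfl
        have hkey : w u • (Pi.single u (1 : K) : DmuSub n r μ → K) ∈ W := by
          have heq : w u • (Pi.single u (1 : K) : DmuSub n r μ → K) =
              w - ∑ x ∈ Finset.univ.erase u,
                w x • (Pi.single x (1 : K) : DmuSub n r μ → K) := by
            have := Finset.add_sum_erase Finset.univ
              (fun x => w x • (Pi.single x (1 : K) : DmuSub n r μ → K)) (Finset.mem_univ u)
            rw [eq_sub_iff_add_eq, this]
            exact (repr_eq K w).symm
          rw [heq]
          exact Submodule.sub_mem _ hwW hrest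
        have : (Pi.single u (1 : K) : DmuSub n r μ → K) =
            (w u)⁻¹ • (w u • (Pi.single u (1 : K) : DmuSub n r μ → K)) := by
          rw [smul_smul, inv_mul_cancel₀ hwu, one_smul]
        rw [this]
        exact Submodule.smul_mem _ _ hkey
    intro u
    exact main (n * n - permLen u.1) u rfl
  apply hne
  rw [Submodule.eq_top_iff']
  intro f
  rw [repr_eq K f]
  apply Submodule.sum_mem
  intro u _
  exact Submodule.smul_mem _ _ (allW u)
end
end

section
/- Let λ be the unique longest element of D_μ. Then U_k(e_λ) = 0 for every 1 ≤ k ≤ n−1, so the line K·e_λ is invariant; and every nonzero invariant subspace of V contains K·e_λ. Hence K·e_λ is the unique minimal nonzero invariant subspace (the socle) of V, and all the operators U_k act on it by 0 (it is a trivial module). -/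
open scoped Classical

noncomputable section

theorem Equiv.Perm.apply_inv_self {α : Type*} (f : Equiv.Perm α) (x : α) : f (f⁻¹ x) = x :=
  Equiv.apply_symm_apply f x

theorem Equiv.Perm.inv_apply_self {α : Type*} (f : Equiv.Perm α) (x : α) : f⁻¹ (f x) = x :=
  Equiv.symm_apply_apply f x

lemma off_mono (μ : ℕ → ℕ) : Monotone (off μ) := fun a b hab =>
  Finset.sum_le_sum_of_subset (Finset.range_subset_range.2 hab)

lemma off_succ (μ : ℕ → ℕ) (t : ℕ) : off μ (t + 1) = off μ t + μ t :=
  Finset.sum_range_succ _ _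

/-- block index of a position -/
def blk (μ : ℕ → ℕ) (p : ℕ) : ℕ :=
  if h : ∃ t, p < off μ (t + 1) then Nat.find h else 0

lemma blk_spec {n r : ℕ} {μ : ℕ → ℕ} (hsum : off μ r = n) (hr : 0 < r) {p : ℕ}
    (hp : p < n) :
    blk μ p < r ∧ off μ (blk μ p) ≤ p ∧ p < off μ (blk μ p + 1) := by
  have hre : r - 1 + 1 = r := Nat.succ_pred_eq_of_pos hr
  have hex : ∃ t, p < off μ (t + 1) := ⟨r - 1, by rw [hre, hsum]; exact hp⟩
  rw [blk, dif_pos hex]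
  refine ⟨?_, ?_, Nat.find_spec hex⟩
  · have : Nat.find hex ≤ r - 1 := Nat.find_min' hex (by rw [hre, hsum]; exact hp)
    omega
  · rcases Nat.eq_zero_or_pos (Nat.find hex) with h0 | h0
    · rw [h0]; simp [off]
    · have h1 := Nat.find_min hex (m := Nat.find hex - 1) (by omega)
      have he : Nat.find hex - 1 + 1 = Nat.find hex := by omega
      rw [he] at h1; omega

lemma blk_eq_iff {n r : ℕ} {μ : ℕ → ℕ} (hsum : off μ r = n) (hr : 0 < r) {p t : ℕ}
    (hp : p < n) (ht : t < r) :
    blk μ p = t ↔ off μ t ≤ p ∧ p < off μ (t + 1) := by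
  obtain ⟨h1, h2, h3⟩ := blk_spec hsum hr hp
  constructor
  · rintro rfl; exact ⟨h2, h3⟩
  · rintro ⟨h4, h5⟩
    by_contra hne
    rcases Nat.lt_or_ge (blk μ p) t with h | h
    · have := off_mono μ (show blk μ p + 1 ≤ t by omega)
      omega
    · have := off_mono μ (show t + 1 ≤ blk μ p by omega)
      omega

lemma blk_mono {n r : ℕ} {μ : ℕ → ℕ} (hsum : off μ r = n) (hr : 0 < r) {p q : ℕ}
    (hpq : p ≤ q) (hq : q < n) : blk μ p ≤ blk μ q := by
  have hp : p < n := lt_of_le_of_lt hpq hq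
  obtain ⟨_, hp2, hp3⟩ := blk_spec hsum hr hp
  obtain ⟨_, hq2, hq3⟩ := blk_spec hsum hr hq
  by_contra h
  have h2 : blk μ q + 1 ≤ blk μ p := by omega
  have := off_mono μ h2
  omega

lemma sameBlock_iff {n r : ℕ} {μ : ℕ → ℕ} (hsum : off μ r = n) (hr : 0 < r) {p q : ℕ}
    (hp : p < n) (hq : q < n) :
    sameBlock r μ p q ↔ blk μ p = blk μ q := by
  constructor
  · rintro ⟨t, ht, h1, h2, h3, h4⟩
    rw [(blk_eq_iff hsum hr hp ht).2 ⟨h1, h2⟩, (blk_eq_iff hsum hr hq ht).2 ⟨h3, h4⟩]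
  · intro h
    obtain ⟨h1, h2, h3⟩ := blk_spec hsum hr hp
    obtain ⟨_, h5, h6⟩ := blk_spec hsum hr hq
    exact ⟨blk μ p, h1, h2, h3, by rw [h]; exact h5, by rw [h]; exact h6⟩

lemma adjSwap_lt_iff {n k : ℕ} (hk : k + 1 < n) {x y : Fin n} (hxy : x < y) :
    adjSwap n k x < adjSwap n k y ↔ ¬((x : ℕ) = k ∧ (y : ℕ) = k + 1) := by
  rw [adjSwap, dif_pos hk]
  rcases x with ⟨x, hx⟩; rcases y with ⟨y, hy⟩
  rw [Fin.lt_def] at hxy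
  simp only [Equiv.swap_apply_def, Fin.lt_def, Fin.ext_iff]
  split_ifs <;> simp_all <;> omega

lemma permLen_adjSwap_mul {n k : ℕ} (hk : k + 1 < n) (u : Equiv.Perm (Fin n))
    (ha : u⁻¹ ⟨k, Nat.lt_of_succ_lt hk⟩ < u⁻¹ ⟨k + 1, hk⟩) :
    permLen (adjSwap n k * u) = permLen u + 1 := by
  set a := u⁻¹ ⟨k, Nat.lt_of_succ_lt hk⟩ with hadef
  set b := u⁻¹ ⟨k + 1, hk⟩ with hbdef
  have hua : u a = ⟨k, Nat.lt_of_succ_lt hk⟩ := Equiv.Perm.apply_inv_self u _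
  have hub : u b = ⟨k + 1, hk⟩ := Equiv.Perm.apply_inv_self u _
  have hset : (Finset.univ.filter fun p : Fin n × Fin n =>
      p.1 < p.2 ∧ (adjSwap n k * u) p.2 < (adjSwap n k * u) p.1) =
      insert (a, b) (Finset.univ.filter fun p : Fin n × Fin n =>
        p.1 < p.2 ∧ u p.2 < u p.1) := by
    ext ⟨p, q⟩
    simp only [Finset.mem_insert, Finset.mem_filter, Finset.mem_univ, true_and,
      Prod.mk.injEq]
    simp only [Equiv.Perm.mul_apply]
    constructor
    · rintro ⟨hpq, hlt⟩
      rcases lt_trichotomy (u p) (u q) with h | h | h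
      · left
        have hcond : (u p : ℕ) = k ∧ (u q : ℕ) = k + 1 := by
          by_contra hc
          exact absurd ((adjSwap_lt_iff hk h).2 hc) (not_lt.2 (le_of_lt hlt))
        have hp1 : u p = ⟨k, Nat.lt_of_succ_lt hk⟩ := Fin.ext hcond.1
        have hq1 : u q = ⟨k + 1, hk⟩ := Fin.ext hcond.2
        constructor
        · apply u.injective; rw [hp1, hua]
        · apply u.injective; rw [hq1, hub]
      · exact absurd (u.injective h) (ne_of_lt hpq)
      · exact Or.inr ⟨hpq, h⟩
    · rintro (⟨hp, hq⟩ | ⟨hpq, hlt⟩)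
      · subst hp; subst hq
        refine ⟨ha, ?_⟩
        rw [hua, hub, adjSwap, dif_pos hk, Equiv.swap_apply_left, Equiv.swap_apply_right]
        exact Fin.mk_lt_mk.2 (Nat.lt_succ_self k)
      · refine ⟨hpq, ?_⟩
        rw [adjSwap_lt_iff hk hlt]
        rintro ⟨h1, h2⟩
        have hq1 : q = a := by apply u.injective; rw [hua]; exact Fin.ext h1
        have hp1 : p = b := by apply u.injective; rw [hub]; exact Fin.ext h2
        rw [hp1, hq1] at hpq
        exact absurd ha (not_lt.2 (le_of_lt hpq))
  rw [permLen, hset, Finset.card_insert_of_notMem, permLen]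
  simp only [Finset.mem_filter, Finset.mem_univ, true_and, not_and]
  intro _
  rw [hua, hub]
  exact not_lt.2 (le_of_lt (Fin.mk_lt_mk.2 (Nat.lt_succ_self k)))

lemma adjSwap_mul_mem_Dmu {n r k : ℕ} {μ : ℕ → ℕ} (hk : k + 1 < n)
    {u : Equiv.Perm (Fin n)} (hu : u ∈ Dmu n r μ)
    (hnb : ¬ sameBlock r μ ((u⁻¹ ⟨k, Nat.lt_of_succ_lt hk⟩ : Fin n) : ℕ)
      ((u⁻¹ ⟨k + 1, hk⟩ : Fin n) : ℕ)) :
    adjSwap n k * u ∈ Dmu n r μ := by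
  intro p q hpq hb
  have h1 : u p < u q := hu p q hpq hb
  rw [Equiv.Perm.mul_apply, Equiv.Perm.mul_apply, adjSwap_lt_iff hk h1]
  rintro ⟨h2, h3⟩
  apply hnb
  have hp1 : p = u⁻¹ ⟨k, Nat.lt_of_succ_lt hk⟩ := by
    apply u.injective; rw [Equiv.Perm.apply_inv_self]; exact Fin.ext h2
  have hq1 : q = u⁻¹ ⟨k + 1, hk⟩ := by
    apply u.injective; rw [Equiv.Perm.apply_inv_self]; exact Fin.ext h3
  rw [← hp1, ← hq1]
  exact hb

def NoUp (n r : ℕ) (μ : ℕ → ℕ) (u : Equiv.Perm (Fin n)) : Prop :=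
  ∀ k, k + 1 < n →
    ¬(permLen (adjSwap n k * u) = permLen u + 1 ∧ adjSwap n k * u ∈ Dmu n r μ)

lemma step_antitone {n r : ℕ} {μ : ℕ → ℕ} (hsum : off μ r = n) (hr : 0 < r)
    {u : Equiv.Perm (Fin n)} (hu : u ∈ Dmu n r μ) (hno : NoUp n r μ u)
    (k : ℕ) (hk : k + 1 < n) :
    blk μ ((u⁻¹ ⟨k + 1, hk⟩ : Fin n) : ℕ) ≤
      blk μ ((u⁻¹ ⟨k, Nat.lt_of_succ_lt hk⟩ : Fin n) : ℕ) := by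
  set a := u⁻¹ ⟨k, Nat.lt_of_succ_lt hk⟩ with hadef
  set b := u⁻¹ ⟨k + 1, hk⟩ with hbdef
  by_cases hb : sameBlock r μ (a : ℕ) (b : ℕ)
  · exact le_of_eq ((sameBlock_iff hsum hr a.isLt b.isLt).1 hb).symm
  · have hab : ¬ (a < b) := fun h =>
      hno k hk ⟨permLen_adjSwap_mul hk u h, adjSwap_mul_mem_Dmu hk hu hb⟩
    have hne : a ≠ b := by
      intro h
      have : (⟨k, Nat.lt_of_succ_lt hk⟩ : Fin n) = ⟨k + 1, hk⟩ := by
        rw [← Equiv.Perm.apply_inv_self u ⟨k, Nat.lt_of_succ_lt hk⟩, ← hadef, h,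
          hbdef, Equiv.Perm.apply_inv_self]
      simp [Fin.ext_iff] at this
    have hba : b < a := by
      rcases lt_trichotomy a b with h | h | h
      · exact absurd h hab
      · exact absurd h hne
      · exact h
    exact blk_mono hsum hr (le_of_lt hba) a.isLt

lemma antitone_of_noup {n r : ℕ} {μ : ℕ → ℕ} (hsum : off μ r = n) (hr : 0 < r)
    {u : Equiv.Perm (Fin n)} (hu : u ∈ Dmu n r μ) (hno : NoUp n r μ u) :
    ∀ x y : Fin n, x ≤ y → blk μ ((u⁻¹ y : Fin n) : ℕ) ≤ blk μ ((u⁻¹ x : Fin n) : ℕ) := by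
  intro x y hxy
  suffices h : ∀ m, (x : ℕ) ≤ m → ∀ hm : m < n,
      blk μ ((u⁻¹ ⟨m, hm⟩ : Fin n) : ℕ) ≤ blk μ ((u⁻¹ x : Fin n) : ℕ) by
    have := h (y : ℕ) hxy y.isLt
    simpa using this
  intro m hm
  induction m, hm using Nat.le_induction with
  | base => intro hm; have : (⟨(x : ℕ), hm⟩ : Fin n) = x := rfl; rw [this]
  | succ m hxm ih =>
    intro hm1
    exact le_trans (step_antitone hsum hr hu hno m hm1) (ih (Nat.lt_of_succ_lt hm1))

lemma card_filter_val_lt {n m : ℕ} (hm : m ≤ n) :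
    (Finset.univ.filter fun y : Fin n => (y : ℕ) < m).card = m := by
  have h : (Finset.univ.filter fun y : Fin n => (y : ℕ) < m) =
      (Finset.range m).attachFin
        (fun a ha => lt_of_lt_of_le (Finset.mem_range.1 ha) hm) := by
    ext y; simp [Finset.mem_attachFin]
  rw [h, Finset.card_attachFin, Finset.card_range]

lemma downclosed_mem_iff {n : ℕ} {S : Finset (Fin n)}
    (hdc : ∀ x y : Fin n, x ≤ y → y ∈ S → x ∈ S) (x : Fin n) :
    x ∈ S ↔ (x : ℕ) < S.card := by
  constructor
  · intro hx
    have hsub : (Finset.univ.filter fun y : Fin n => (y : ℕ) < (x : ℕ) + 1) ⊆ S := by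
      intro y hy
      simp only [Finset.mem_filter, Finset.mem_univ, true_and] at hy
      exact hdc y x (by omega) hx
    have := Finset.card_le_card hsub
    rw [card_filter_val_lt (by omega : (x : ℕ) + 1 ≤ n)] at this
    omega
  · intro hx
    by_contra hxS
    have hsub : S ⊆ Finset.univ.filter fun y : Fin n => (y : ℕ) < (x : ℕ) := by
      intro y hy
      simp only [Finset.mem_filter, Finset.mem_univ, true_and]
      by_contra hyx
      exact hxS (hdc x y (by omega) hy)
    have := Finset.card_le_card hsub
    rw [card_filter_val_lt (le_of_lt x.isLt)] at this
    omega

lemma fiber_card {n r : ℕ} {μ : ℕ → ℕ} (hsum : off μ r = n) (hr : 0 < r)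
    (u : Equiv.Perm (Fin n)) {t : ℕ} (ht : t < r) :
    (Finset.univ.filter fun x : Fin n =>
      blk μ ((u⁻¹ x : Fin n) : ℕ) = t).card = μ t := by
  have h1 : (Finset.univ.filter fun p : Fin n => blk μ (p : ℕ) = t).card = μ t := by
    have hoff : off μ (t + 1) ≤ n := by
      rw [← hsum]; exact off_mono μ (Nat.succ_le_of_lt ht)
    have h : (Finset.univ.filter fun p : Fin n => blk μ (p : ℕ) = t) =
        (Finset.Ico (off μ t) (off μ (t + 1))).attachFin
          (fun a ha => lt_of_lt_of_le (Finset.mem_Ico.1 ha).2 hoff) := by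
      ext p
      simp only [Finset.mem_filter, Finset.mem_univ, true_and, Finset.mem_attachFin,
        Finset.mem_Ico]
      exact blk_eq_iff hsum hr p.isLt ht
    rw [h, Finset.card_attachFin, Nat.card_Ico, off_succ]
    omega
  rw [← h1]
  apply Finset.card_bij (fun x _ => u⁻¹ x)
  · intro x hx
    simp only [Finset.mem_filter, Finset.mem_univ, true_and] at hx ⊢
    exact hx
  · intro x _ y _ h
    exact (Equiv.injective u⁻¹) h
  · intro p hp
    simp only [Finset.mem_filter, Finset.mem_univ, true_and] at hp ⊢
    exact ⟨u p, by simpa using hp, by simp⟩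

lemma cum_card {n r : ℕ} {μ : ℕ → ℕ} (hsum : off μ r = n) (hr : 0 < r)
    (u : Equiv.Perm (Fin n)) :
    ∀ m t, t + m = r →
      (Finset.univ.filter fun x : Fin n =>
        t ≤ blk μ ((u⁻¹ x : Fin n) : ℕ)).card = n - off μ t := by
  intro m
  induction m with
  | zero =>
    intro t htm
    have he : (Finset.univ.filter fun x : Fin n =>
        t ≤ blk μ ((u⁻¹ x : Fin n) : ℕ)) = ∅ := by
      apply Finset.eq_empty_of_forall_notMem
      intro x hx
      simp only [Finset.mem_filter, Finset.mem_univ, true_and] at hx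
      have := (blk_spec hsum hr (u⁻¹ x).isLt).1
      omega
    rw [he]; simp [show t = r by omega, hsum]
  | succ m ih =>
    intro t htm
    have ht : t < r := by omega
    have hoff : off μ (t + 1) ≤ n := by
      rw [← hsum]; exact off_mono μ (Nat.succ_le_of_lt ht)
    have hsplit : (Finset.univ.filter fun x : Fin n =>
        t ≤ blk μ ((u⁻¹ x : Fin n) : ℕ)) =
        (Finset.univ.filter fun x : Fin n => blk μ ((u⁻¹ x : Fin n) : ℕ) = t) ∪
        (Finset.univ.filter fun x : Fin n => t + 1 ≤ blk μ ((u⁻¹ x : Fin n) : ℕ)) := by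
      ext x
      simp only [Finset.mem_union, Finset.mem_filter, Finset.mem_univ, true_and]
      omega
    have hdisj : Disjoint
        (Finset.univ.filter fun x : Fin n => blk μ ((u⁻¹ x : Fin n) : ℕ) = t)
        (Finset.univ.filter fun x : Fin n => t + 1 ≤ blk μ ((u⁻¹ x : Fin n) : ℕ)) := by
      rw [Finset.disjoint_left]
      intro x hx hy
      simp only [Finset.mem_filter, Finset.mem_univ, true_and] at hx hy
      omega
    rw [hsplit, Finset.card_union_of_disjoint hdisj, fiber_card hsum hr u ht,
      ih (t + 1) (by omega)]
    have := off_succ μ t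
    omega

lemma blk_inv_bounds {n r : ℕ} {μ : ℕ → ℕ} (hsum : off μ r = n) (hr : 0 < r)
    {u : Equiv.Perm (Fin n)} (hu : u ∈ Dmu n r μ) (hno : NoUp n r μ u) (x : Fin n) :
    n - off μ (blk μ ((u⁻¹ x : Fin n) : ℕ) + 1) ≤ (x : ℕ) ∧
      (x : ℕ) < n - off μ (blk μ ((u⁻¹ x : Fin n) : ℕ)) := by
  set t := blk μ ((u⁻¹ x : Fin n) : ℕ) with htdef
  have ht : t < r := (blk_spec hsum hr (u⁻¹ x).isLt).1
  have hdc : ∀ s, ∀ x' y' : Fin n, x' ≤ y' →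
      y' ∈ (Finset.univ.filter fun z : Fin n => s ≤ blk μ ((u⁻¹ z : Fin n) : ℕ)) →
      x' ∈ (Finset.univ.filter fun z : Fin n => s ≤ blk μ ((u⁻¹ z : Fin n) : ℕ)) := by
    intro s x' y' hxy hy
    simp only [Finset.mem_filter, Finset.mem_univ, true_and] at hy ⊢
    exact le_trans hy (antitone_of_noup hsum hr hu hno x' y' hxy)
  constructor
  · have hcard := cum_card hsum hr u (r - (t + 1)) (t + 1) (by omega)
    have hx : x ∉ (Finset.univ.filter fun z : Fin n =>
        t + 1 ≤ blk μ ((u⁻¹ z : Fin n) : ℕ)) := by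
      simp only [Finset.mem_filter, Finset.mem_univ, true_and]
      omega
    rw [downclosed_mem_iff (hdc (t + 1)), hcard] at hx
    omega
  · have hcard := cum_card hsum hr u (r - t) t (by omega)
    have hx : x ∈ (Finset.univ.filter fun z : Fin n =>
        t ≤ blk μ ((u⁻¹ z : Fin n) : ℕ)) := by
      simp only [Finset.mem_filter, Finset.mem_univ, true_and]
      omega
    rw [downclosed_mem_iff (hdc t), hcard] at hx
    exact hx

lemma blk_inv_congr {n r : ℕ} {μ : ℕ → ℕ} (hsum : off μ r = n) (hr : 0 < r)
    {u w : Equiv.Perm (Fin n)} (hu : u ∈ Dmu n r μ) (hw : w ∈ Dmu n r μ)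
    (hnou : NoUp n r μ u) (hnow : NoUp n r μ w) (x : Fin n) :
    blk μ ((u⁻¹ x : Fin n) : ℕ) = blk μ ((w⁻¹ x : Fin n) : ℕ) := by
  obtain ⟨h1, h2⟩ := blk_inv_bounds hsum hr hu hnou x
  obtain ⟨h3, h4⟩ := blk_inv_bounds hsum hr hw hnow x
  set t := blk μ ((u⁻¹ x : Fin n) : ℕ) with htdef
  set t' := blk μ ((w⁻¹ x : Fin n) : ℕ) with htdef'
  have ht : t < r := (blk_spec hsum hr (u⁻¹ x).isLt).1
  have ht' : t' < r := (blk_spec hsum hr (w⁻¹ x).isLt).1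
  by_contra hne
  rcases Nat.lt_or_ge t t' with h | h
  · have ho1 := off_mono μ (show t + 1 ≤ t' by omega)
    have ho2 : off μ t' ≤ n := by rw [← hsum]; exact off_mono μ (le_of_lt ht')
    omega
  · have h' : t' < t := by omega
    have ho1 := off_mono μ (show t' + 1 ≤ t by omega)
    have ho2 : off μ t ≤ n := by rw [← hsum]; exact off_mono μ (le_of_lt ht)
    omega

lemma eq_of_noup {n r : ℕ} {μ : ℕ → ℕ} (hsum : off μ r = n) (hr : 0 < r)
    {u w : Equiv.Perm (Fin n)} (hu : u ∈ Dmu n r μ) (hw : w ∈ Dmu n r μ)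
    (hnou : NoUp n r μ u) (hnow : NoUp n r μ w) : u = w := by
  apply Equiv.ext
  intro p
  obtain ⟨ht, hp1, hp2⟩ := blk_spec hsum hr p.isLt
  set t := blk μ ((p : Fin n) : ℕ) with htdef
  have hblk : off μ (t + 1) = off μ t + μ t := off_succ μ t
  have hoff1 : off μ (t + 1) ≤ n := by
    rw [← hsum]; exact off_mono μ (Nat.succ_le_of_lt ht)
  set f : Fin (μ t) → Fin n :=
    fun i => u ⟨off μ t + (i : ℕ), by have := i.isLt; omega⟩ with hfdef
  set g : Fin (μ t) → Fin n :=
    fun i => w ⟨off μ t + (i : ℕ), by have := i.isLt; omega⟩ with hgdef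
  have hsb : ∀ i j : Fin (μ t),
      sameBlock r μ (off μ t + (i : ℕ)) (off μ t + (j : ℕ)) := by
    intro i j
    have hi := i.isLt; have hj := j.isLt
    exact ⟨t, ht, by omega, by omega, by omega, by omega⟩
  have hf : StrictMono f := by
    intro i j hij
    exact hu _ _ (Fin.mk_lt_mk.2 (by omega)) (hsb i j)
  have hg : StrictMono g := by
    intro i j hij
    exact hw _ _ (Fin.mk_lt_mk.2 (by omega)) (hsb i j)
  have hmem : ∀ (v : Equiv.Perm (Fin n)) (x : Fin n),
      (∃ i : Fin (μ t), v ⟨off μ t + (i : ℕ), by have := i.isLt; omega⟩ = x) ↔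
      blk μ ((v⁻¹ x : Fin n) : ℕ) = t := by
    intro v x
    constructor
    · rintro ⟨i, hi⟩
      have hilt := i.isLt
      have hvx : ((v⁻¹ x : Fin n) : ℕ) = off μ t + (i : ℕ) := by
        rw [← hi, Equiv.Perm.inv_apply_self]
      rw [hvx]
      exact (blk_eq_iff hsum hr (by omega) ht).2 ⟨by omega, by omega⟩
    · intro hbx
      have hq := blk_spec hsum hr (v⁻¹ x).isLt
      rw [hbx] at hq
      refine ⟨⟨((v⁻¹ x : Fin n) : ℕ) - off μ t, by omega⟩, ?_⟩
      have : (⟨off μ t + (((v⁻¹ x : Fin n) : ℕ) - off μ t), by omega⟩ : Fin n) =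
          (v⁻¹ x : Fin n) := by
        apply Fin.ext; simp only [Fin.val_mk]; omega
      rw [this, Equiv.Perm.apply_inv_self]
  have hrange : Set.range f = Set.range g := by
    ext x
    simp only [Set.mem_range]
    rw [show (∃ i, f i = x) ↔ blk μ ((u⁻¹ x : Fin n) : ℕ) = t from hmem u x,
      show (∃ i, g i = x) ↔ blk μ ((w⁻¹ x : Fin n) : ℕ) = t from hmem w x,
      blk_inv_congr hsum hr hu hw hnou hnow x]
  haveI : WellFoundedLT (Fin (μ t)) := ⟨Finite.wellFounded_of_trans_of_irrefl _⟩
  have hfg : f = g := (hf.range_inj hg).1 hrange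
  have hi : (p : ℕ) - off μ t < μ t := by omega
  have h1 : u p = f ⟨(p : ℕ) - off μ t, hi⟩ := by
    rw [hfdef]; congr 1; apply Fin.ext; simp; omega
  have h2 : w p = g ⟨(p : ℕ) - off μ t, hi⟩ := by
    rw [hgdef]; congr 1; apply Fin.ext; simp; omega
  rw [h1, h2, hfg]

/-- Lemma 1.3(iii) of the paper, concretely: for the unique
longest element `λ` of `D_μ`, one has `U_k (e_λ) = 0` for every `k`, so the
line `K ⬝ e_λ` is invariant and the `U_k` act on it by `0`; and every nonzero
invariant subspace of `V` contains `K ⬝ e_λ`. Hence `K ⬝ e_λ` is the unique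
minimal nonzero invariant subspace (the socle) of `V`. -/
theorem stmt12 (K : Type*) [Field K] {n r : ℕ} (hn : 1 ≤ n) (μ : ℕ → ℕ)
    (hpos : ∀ t < r, 1 ≤ μ t) (hsum : off μ r = n)
    (U : ℕ → ((DmuSub n r μ → K) →ₗ[K] (DmuSub n r μ → K)))
    (hU : IsUFamily K n r μ U)
    (lam : Equiv.Perm (Fin n)) (hlam : lam ∈ Dmu n r μ)
    (hmax : ∀ u ∈ Dmu n r μ, u ≠ lam → permLen u < permLen lam) :
    (∀ k, k + 1 < n → U k (Pi.single (⟨lam, hlam⟩ : DmuSub n r μ) (1 : K)) = 0) ∧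
    (∀ k, k + 1 < n → ∀ v ∈ Submodule.span K
        {Pi.single (⟨lam, hlam⟩ : DmuSub n r μ) (1 : K)},
      U k v ∈ Submodule.span K {Pi.single (⟨lam, hlam⟩ : DmuSub n r μ) (1 : K)}) ∧
    (∀ W : Submodule K (DmuSub n r μ → K),
      (∀ k, k + 1 < n → ∀ v ∈ W, U k v ∈ W) → W ≠ ⊥ →
      Submodule.span K {Pi.single (⟨lam, hlam⟩ : DmuSub n r μ) (1 : K)} ≤ W) := by
  have hr : 0 < r := by
    by_contra h
    have hr0 : r = 0 := by omega
    rw [hr0] at hsum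
    simp [off] at hsum
    omega
  -- λ admits no upward move
  have hno_lam : NoUp n r μ lam := by
    rintro k hk ⟨h1, h2⟩
    have hne : adjSwap n k * lam ≠ lam := by
      intro h; rw [h] at h1; omega
    have := hmax _ h2 hne
    omega
  -- every non-λ element of D_μ admits an upward move
  have hup : ∀ u ∈ Dmu n r μ, u ≠ lam → ∃ k, k + 1 < n ∧
      permLen (adjSwap n k * u) = permLen u + 1 ∧ adjSwap n k * u ∈ Dmu n r μ := by
    intro u hu hne
    by_contra h
    push_neg at h
    apply hne
    apply eq_of_noup hsum hr hu hlam _ hno_lam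
    intro k hk hc
    exact h k hk hc.1 hc.2
  -- part 1
  have part1 : ∀ k, k + 1 < n →
      U k (Pi.single (⟨lam, hlam⟩ : DmuSub n r μ) (1 : K)) = 0 := by
    intro k hk
    rw [hU k hk ⟨lam, hlam⟩, dif_neg (hno_lam k hk)]
  refine ⟨part1, ?_, ?_⟩
  · -- part 2
    intro k hk v hv
    rw [Submodule.mem_span_singleton] at hv
    obtain ⟨c, rfl⟩ := hv
    rw [map_smul, part1 k hk, smul_zero]
    exact Submodule.zero_mem _
  · -- part 3
    intro W hW hWne
    -- expansion of U k v
    have hUv : ∀ k, k + 1 < n → ∀ v : DmuSub n r μ → K,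
        U k v = ∑ u' : DmuSub n r μ, v u' •
          ((if h : permLen (adjSwap n k * u'.1) = permLen u'.1 + 1 ∧
              adjSwap n k * u'.1 ∈ Dmu n r μ
           then Pi.single (⟨adjSwap n k * u'.1, h.2⟩ : DmuSub n r μ) (1 : K)
           else 0) : DmuSub n r μ → K) := by
      intro k hk v
      conv_lhs => rw [← Finset.univ_sum_single v, map_sum]
      apply Finset.sum_congr rfl
      intro u' _
      have hs : Pi.single u' (v u') = v u' • (Pi.single u' (1 : K) : DmuSub n r μ → K) := by
        funext x
        by_cases hx : x = u' <;> simp [hx, Pi.single_apply]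
      rw [hs, map_smul, hU k hk u']
    have hval : ∀ k, ∀ hk : k + 1 < n, ∀ v : DmuSub n r μ → K,
        ∀ u : DmuSub n r μ,
        ∀ h : permLen (adjSwap n k * u.1) = permLen u.1 + 1 ∧
          adjSwap n k * u.1 ∈ Dmu n r μ,
        U k v (⟨adjSwap n k * u.1, h.2⟩ : DmuSub n r μ) = v u := by
      intro k hk v u h
      rw [hUv k hk v, Finset.sum_apply]
      rw [Finset.sum_eq_single u]
      · rw [dif_pos h]
        simp [Pi.single_apply]
      · intro b _ hb
        by_cases hcb : permLen (adjSwap n k * b.1) = permLen b.1 + 1 ∧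
            adjSwap n k * b.1 ∈ Dmu n r μ
        · rw [dif_pos hcb]
          have hne : (⟨adjSwap n k * u.1, h.2⟩ : DmuSub n r μ) ≠
              ⟨adjSwap n k * b.1, hcb.2⟩ := by
            intro he
            apply hb
            apply Subtype.ext
            have := congrArg Subtype.val he
            simpa using (mul_left_cancel this).symm
          rw [Pi.smul_apply, Pi.single_eq_of_ne hne, smul_zero]
        · rw [dif_neg hcb]
          simp
      · intro h'
        exact absurd (Finset.mem_univ u) h'
    have hsupp : ∀ k, ∀ hk : k + 1 < n, ∀ v : DmuSub n r μ → K,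
        ∀ x : DmuSub n r μ, U k v x ≠ 0 →
        ∃ u' : DmuSub n r μ, v u' ≠ 0 ∧ permLen x.1 = permLen u'.1 + 1 := by
      intro k hk v x hx
      rw [hUv k hk v, Finset.sum_apply] at hx
      obtain ⟨u', -, hu'⟩ := Finset.exists_ne_zero_of_sum_ne_zero hx
      refine ⟨u', ?_, ?_⟩
      · intro h0
        rw [h0, zero_smul] at hu'
        exact hu' (Pi.zero_apply x)
      · by_cases hc : permLen (adjSwap n k * u'.1) = permLen u'.1 + 1 ∧
            adjSwap n k * u'.1 ∈ Dmu n r μ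
        · rw [dif_pos hc] at hu'
          have hxe : x = ⟨adjSwap n k * u'.1, hc.2⟩ := by
            by_contra hne
            rw [Pi.smul_apply, Pi.single_eq_of_ne hne, smul_zero] at hu'
            exact hu' rfl
          rw [hxe]
          exact hc.1
        · rw [dif_neg hc] at hu'
          simp at hu'
    -- the base case: a vector supported only at λ
    have hbase : ∀ v, v ∈ W → v ≠ 0 →
        (∀ x : DmuSub n r μ, v x ≠ 0 → x = (⟨lam, hlam⟩ : DmuSub n r μ)) →
        Pi.single (⟨lam, hlam⟩ : DmuSub n r μ) (1 : K) ∈ W := by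
      intro v hvW hv0 hall
      set c := v ⟨lam, hlam⟩ with hc
      have hc0 : c ≠ 0 := by
        intro h0
        apply hv0
        funext x
        by_cases hxe : x = (⟨lam, hlam⟩ : DmuSub n r μ)
        · rw [hxe, ← hc, h0]; rfl
        · by_contra hvx
          exact hxe (hall x (by simpa using hvx))
      have hveq : v = c • (Pi.single (⟨lam, hlam⟩ : DmuSub n r μ) (1 : K) : DmuSub n r μ → K) := by
        funext x
        by_cases hxe : x = (⟨lam, hlam⟩ : DmuSub n r μ)
        · rw [hxe]; simp [← hc]
        · have hvx : v x = 0 := by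
            by_contra h
            exact hxe (hall x h)
          rw [hvx, Pi.smul_apply, Pi.single_eq_of_ne hxe, smul_zero]
      have heq : Pi.single (⟨lam, hlam⟩ : DmuSub n r μ) (1 : K) = c⁻¹ • v := by
        rw [hveq, smul_smul, inv_mul_cancel₀ hc0, one_smul]
      rw [heq]
      exact W.smul_mem _ hvW
    -- lengths are bounded by that of λ
    have key : ∀ d : ℕ, ∀ v, v ∈ W → v ≠ 0 →
        (∀ x : DmuSub n r μ, v x ≠ 0 → permLen lam ≤ permLen x.1 + d) →
        Pi.single (⟨lam, hlam⟩ : DmuSub n r μ) (1 : K) ∈ W := by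
      intro d
      induction d with
      | zero =>
        intro v hvW hv0 hbd
        apply hbase v hvW hv0
        intro x hx
        have h1 := hbd x hx
        apply Subtype.ext
        by_contra hne
        have := hmax x.1 x.2 hne
        omega
      | succ d ih =>
        intro v hvW hv0 hbd
        by_cases hall : ∀ x : DmuSub n r μ, v x ≠ 0 → x = (⟨lam, hlam⟩ : DmuSub n r μ)
        · exact hbase v hvW hv0 hall
        · push_neg at hall
          obtain ⟨x0, hx0, hx0ne⟩ := hall
          have hx0ne' : x0.1 ≠ lam := fun h => hx0ne (Subtype.ext h)
          obtain ⟨k, hk, hc1, hc2⟩ := hup x0.1 x0.2 hx0ne'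
          refine ih (U k v) (hW k hk v hvW) ?_ ?_
          · intro h0
            have hv1 := hval k hk v x0 ⟨hc1, hc2⟩
            rw [h0] at hv1
            exact hx0 (by simpa using hv1.symm)
          · intro x hx
            obtain ⟨u', hu', hlen⟩ := hsupp k hk v x hx
            have := hbd u' hu'
            omega
    obtain ⟨v, hvW, hv0⟩ := Submodule.exists_mem_ne_zero_of_ne_bot hWne
    have hmem := key (permLen lam) v hvW hv0 (fun x _ => by omega)
    rw [Submodule.span_le, Set.singleton_subset_iff]
    exact hmem
end
end
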